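/- Let a ∈ (0,1) and let f : ℝ → ℝ be measurable with x ↦ f(x)·e^{−(x−y)²/2} integrable for every y. Define f̃(x) = e^{(1−a)x²/(2a)}·f(x). Then for every y ∈ ℝ, e^{(1−a)y²/2}·T_a[f](y) = a·∫_ℝ f̃(ax)·sign(x − y)·exp(−a(x−y)²/2) dx = ∫_ℝ f̃(u)·sign(u − ay)·exp(−(u−ay)²/(2a)) du. -/

import Mathlib

open MeasureTheory Real

theorem stmt_14 (a : ℝ) (ha : 0 < a) (ha1 : a < 1)
    (f : ℝ → ℝ) (hf_meas : Measurable f)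
    (hint : ∀ y : ℝ, Integrable fun x => f x * Real.exp (-(x - y) ^ 2 / 2)) :
    ∀ y : ℝ,
      (Real.exp ((1 - a) * y ^ 2 / 2) *
          ∫ x, f x * Real.sign (x - a * y) * Real.exp (-(x - y) ^ 2 / 2)
        = a * ∫ x, (Real.exp ((1 - a) * (a * x) ^ 2 / (2 * a)) * f (a * x)) *
            Real.sign (x - y) * Real.exp (-a * (x - y) ^ 2 / 2)) ∧
      (Real.exp ((1 - a) * y ^ 2 / 2) *
          ∫ x, f x * Real.sign (x - a * y) * Real.exp (-(x - y) ^ 2 / 2)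
        = ∫ u, (Real.exp ((1 - a) * u ^ 2 / (2 * a)) * f u) *
            Real.sign (u - a * y) * Real.exp (-(u - a * y) ^ 2 / (2 * a))) := by
  intro y
  have ha0 : a ≠ 0 := ne_of_gt ha
  -- the second equality
  have h2 : Real.exp ((1 - a) * y ^ 2 / 2) *
          ∫ x, f x * Real.sign (x - a * y) * Real.exp (-(x - y) ^ 2 / 2)
        = ∫ u, (Real.exp ((1 - a) * u ^ 2 / (2 * a)) * f u) *
            Real.sign (u - a * y) * Real.exp (-(u - a * y) ^ 2 / (2 * a)) := by
    rw [← integral_const_mul]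
    apply integral_congr_ae
    filter_upwards with x
    have key : Real.exp ((1 - a) * y ^ 2 / 2) * Real.exp (-(x - y) ^ 2 / 2)
        = Real.exp ((1 - a) * x ^ 2 / (2 * a)) * Real.exp (-(x - a * y) ^ 2 / (2 * a)) := by
      rw [← Real.exp_add, ← Real.exp_add]
      congr 1
      field_simp
      ring
    calc Real.exp ((1 - a) * y ^ 2 / 2) * (f x * Real.sign (x - a * y) * Real.exp (-(x - y) ^ 2 / 2))
        = (Real.exp ((1 - a) * y ^ 2 / 2) * Real.exp (-(x - y) ^ 2 / 2)) *
            (f x * Real.sign (x - a * y)) := by ring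
      _ = (Real.exp ((1 - a) * x ^ 2 / (2 * a)) * Real.exp (-(x - a * y) ^ 2 / (2 * a))) *
            (f x * Real.sign (x - a * y)) := by rw [key]
      _ = (Real.exp ((1 - a) * x ^ 2 / (2 * a)) * f x) * Real.sign (x - a * y) *
            Real.exp (-(x - a * y) ^ 2 / (2 * a)) := by ring
  have hsign : ∀ t : ℝ, Real.sign (a * t) = Real.sign t := by
    intro t
    rcases lt_trichotomy t 0 with h | h | h
    · rw [Real.sign_of_neg h, Real.sign_of_neg (mul_neg_of_pos_of_neg ha h)]
    · rw [h, mul_zero]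
    · rw [Real.sign_of_pos h, Real.sign_of_pos (mul_pos ha h)]
  set g : ℝ → ℝ := fun u => (Real.exp ((1 - a) * u ^ 2 / (2 * a)) * f u) *
      Real.sign (u - a * y) * Real.exp (-(u - a * y) ^ 2 / (2 * a)) with hg
  have hcomp : ∀ x : ℝ, (Real.exp ((1 - a) * (a * x) ^ 2 / (2 * a)) * f (a * x)) *
      Real.sign (x - y) * Real.exp (-a * (x - y) ^ 2 / 2) = g (a * x) := by
    intro x
    simp only [hg]
    have h1 : a * x - a * y = a * (x - y) := by ring
    have h2 : Real.sign (a * x - a * y) = Real.sign (x - y) := by rw [h1, hsign]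
    rw [h2]
    congr 2
    field_simp
  refine ⟨?_, h2⟩
  rw [h2]
  have hc : (∫ x, (Real.exp ((1 - a) * (a * x) ^ 2 / (2 * a)) * f (a * x)) *
      Real.sign (x - y) * Real.exp (-a * (x - y) ^ 2 / 2)) = ∫ x, g (a * x) := by
    exact integral_congr_ae (Filter.Eventually.of_forall hcomp)
  rw [hc, Measure.integral_comp_mul_left g a, abs_of_pos (inv_pos.mpr ha),
    smul_eq_mul, ← mul_assoc, mul_inv_cancel₀ ha0, one_mul]
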